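/- Let G = C ⊕ S be a real Lie algebra of skew-Hermitian matrices, where C is contained in the center of G and S is a semisimple Lie subalgebra, with C and S orthogonal for the Frobenius inner product. Let H_k = C_k + S_k (C_k ∈ C, S_k ∈ S) for k = 1,…,r, and let L = Lie{H_1,…,H_r}. Then the following are equivalent: (1) S ⊆ L; (2) Lie{S_1,…,S_r} = S; (3) L = span{C_1,…,C_r} ⊕ S. -/

import Mathlib

open scoped Matrix

attribute [local instance 100] LieRing.ofAssociativeRing

/-- A semisimple Lie algebra is perfect. -/
lemma semisimple_perfect (R L : Type*) [CommRing R] [LieRing L] [LieAlgebra R L]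
    [LieAlgebra.IsSemisimple R L] : ⁅(⊤ : LieIdeal R L), (⊤ : LieIdeal R L)⁆ = ⊤ := by
  rw [eq_top_iff]
  conv_lhs => rw [← LieAlgebra.IsSemisimple.sSup_atoms_eq_top (R := R) (L := L)]
  apply sSup_le
  rintro I hI
  have h1 : ⁅I, I⁆ ≤ I := LieSubmodule.lie_le_left I I
  have h2 : ⁅I, I⁆ = I := by
    rcases (hI.le_iff.mp h1) with h | h
    · exfalso
      apply LieAlgebra.IsSemisimple.non_abelian_of_isAtom I hI
      rw [LieSubmodule.lie_eq_bot_iff] at h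
      exact ⟨fun x y => Subtype.ext (by simpa using h x x.2 y y.2)⟩
    · exact h
  rw [← h2]
  exact LieSubmodule.mono_lie le_top le_top

/-- For a Lie algebra G = C ⊕ S of skew-Hermitian matrices with C central,
S semisimple, C ⊥ S for the Frobenius inner product, and generators H_k = C_k + S_k,
the three conditions (1) S ⊆ L, (2) Lie{S_k} = S, (3) L = span{C_k} ⊕ S are equivalent. -/
theorem stmt1 (N : ℕ)
    (C : Submodule ℝ (Matrix (Fin N) (Fin N) ℂ))
    (S : LieSubalgebra ℝ (Matrix (Fin N) (Fin N) ℂ))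
    (hskew : ∀ A : Matrix (Fin N) (Fin N) ℂ,
      (A ∈ C ∨ A ∈ S) → Aᴴ = -A)
    (hCcentral : ∀ c ∈ C, ∀ x, x ∈ C ⊔ S.toSubmodule → ⁅c, x⁆ = 0)
    (hinf : C ⊓ S.toSubmodule = ⊥)
    (horth : ∀ c ∈ C, ∀ s ∈ S, (c * sᴴ).trace = 0)
    (hss : LieAlgebra.IsSemisimple ℝ ↥S)
    (r : ℕ) (Ck Sk : Fin r → Matrix (Fin N) (Fin N) ℂ)
    (hCk : ∀ k, Ck k ∈ C) (hSk : ∀ k, Sk k ∈ S) :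
    ((S.toSubmodule ≤
        (LieSubalgebra.lieSpan ℝ (Matrix (Fin N) (Fin N) ℂ)
          (Set.range fun k => Ck k + Sk k)).toSubmodule) ↔
      (LieSubalgebra.lieSpan ℝ (Matrix (Fin N) (Fin N) ℂ) (Set.range Sk) = S)) ∧
    ((LieSubalgebra.lieSpan ℝ (Matrix (Fin N) (Fin N) ℂ) (Set.range Sk) = S) ↔
      ((LieSubalgebra.lieSpan ℝ (Matrix (Fin N) (Fin N) ℂ)
          (Set.range fun k => Ck k + Sk k)).toSubmodule =
        Submodule.span ℝ (Set.range Ck) ⊔ S.toSubmodule)) := by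
  classical
  set L := LieSubalgebra.lieSpan ℝ (Matrix (Fin N) (Fin N) ℂ)
      (Set.range fun k => Ck k + Sk k) with hLdef
  set L' := LieSubalgebra.lieSpan ℝ (Matrix (Fin N) (Fin N) ℂ) (Set.range Sk) with hL'def
  -- basic containments
  have hL'S : L' ≤ S := by
    rw [hL'def, LieSubalgebra.lieSpan_le]
    rintro _ ⟨k, rfl⟩; exact hSk k
  have hspanC : Submodule.span ℝ (Set.range Ck) ≤ C := by
    rw [Submodule.span_le]
    rintro _ ⟨k, rfl⟩; exact hCk k
  -- bracket computation
  have hbr : ∀ c ∈ C, ∀ s ∈ S, ∀ c' ∈ C, ∀ s' ∈ S, ⁅c + s, c' + s'⁆ = ⁅s, s'⁆ := by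
    intro c hc s hs c' hc' s' hs'
    have h1 : ⁅c, c' + s'⁆ = 0 :=
      hCcentral c hc _ (add_mem (Submodule.mem_sup_left hc') (Submodule.mem_sup_right hs'))
    have h2 : ⁅s, c'⁆ = 0 := by
      rw [← lie_skew, hCcentral c' hc' s (Submodule.mem_sup_right hs), neg_zero]
    rw [add_lie, h1, zero_add, lie_add, h2, zero_add]
  -- Key A : L ⊆ span Ck ⊕ L'
  have keyA : L.toSubmodule ≤ Submodule.span ℝ (Set.range Ck) ⊔ L'.toSubmodule := by
    let R' : LieSubalgebra ℝ (Matrix (Fin N) (Fin N) ℂ) :=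
      { Submodule.span ℝ (Set.range Ck) ⊔ L'.toSubmodule with
        lie_mem' := by
          intro x y hx hy
          have hx' : x ∈ Submodule.span ℝ (Set.range Ck) ⊔ L'.toSubmodule := hx
          have hy' : y ∈ Submodule.span ℝ (Set.range Ck) ⊔ L'.toSubmodule := hy
          obtain ⟨c, hc, s, hs, rfl⟩ := Submodule.mem_sup.mp hx'
          obtain ⟨c', hc', s', hs', rfl⟩ := Submodule.mem_sup.mp hy'
          have hcomp : ⁅c + s, c' + s'⁆ = ⁅s, s'⁆ :=
            hbr c (hspanC hc) s (hL'S hs) c' (hspanC hc') s' (hL'S hs')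
          show ⁅c + s, c' + s'⁆ ∈ Submodule.span ℝ (Set.range Ck) ⊔ L'.toSubmodule
          rw [hcomp]
          exact Submodule.mem_sup_right (L'.lie_mem hs hs') }
    have hle : L ≤ R' := by
      rw [hLdef, LieSubalgebra.lieSpan_le]
      rintro _ ⟨k, rfl⟩
      show Ck k + Sk k ∈ Submodule.span ℝ (Set.range Ck) ⊔ L'.toSubmodule
      exact Submodule.mem_sup.mpr
        ⟨Ck k, Submodule.subset_span ⟨k, rfl⟩, Sk k,
          LieSubalgebra.subset_lieSpan ⟨k, rfl⟩, rfl⟩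
    exact hle
  -- Key B : every element of L' can be corrected by a central element to lie in L
  have keyB : ∀ x ∈ L', ∃ c ∈ C, c + x ∈ L := by
    have hQ : L' ≤
        ({ S.toSubmodule ⊓ (C ⊔ L.toSubmodule) with
          lie_mem' := by
            intro x y hx hy
            have hx' : x ∈ S.toSubmodule ⊓ (C ⊔ L.toSubmodule) := hx
            have hy' : y ∈ S.toSubmodule ⊓ (C ⊔ L.toSubmodule) := hy
            obtain ⟨hxS, hxCL⟩ := Submodule.mem_inf.mp hx'
            obtain ⟨hyS, hyCL⟩ := Submodule.mem_inf.mp hy'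
            show ⁅x, y⁆ ∈ S.toSubmodule ⊓ (C ⊔ L.toSubmodule)
            refine Submodule.mem_inf.mpr ⟨S.lie_mem hxS hyS, ?_⟩
            obtain ⟨c, hc, l, hl, hx_eq⟩ := Submodule.mem_sup.mp hxCL
            obtain ⟨c', hc', l', hl', hy_eq⟩ := Submodule.mem_sup.mp hyCL
            have hlCS : l ∈ C ⊔ S.toSubmodule := by
              have hl2 : l = x - c := eq_sub_of_add_eq' hx_eq
              rw [hl2]
              exact sub_mem (Submodule.mem_sup_right hxS) (Submodule.mem_sup_left hc)
            have h1 : ⁅c, y⁆ = 0 := hCcentral c hc y (Submodule.mem_sup_right hyS)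
            have h2 : ⁅l, c'⁆ = 0 := by
              rw [← lie_skew, hCcentral c' hc' l hlCS, neg_zero]
            have hxy : ⁅x, y⁆ = ⁅l, l'⁆ := by
              rw [← hx_eq, add_lie, h1, zero_add, ← hy_eq, lie_add, h2, zero_add]
            rw [hxy]
            exact Submodule.mem_sup_right (L.lie_mem hl hl') } :
          LieSubalgebra ℝ (Matrix (Fin N) (Fin N) ℂ)) := by
      rw [hL'def, LieSubalgebra.lieSpan_le]
      rintro _ ⟨k, rfl⟩
      show Sk k ∈ S.toSubmodule ⊓ (C ⊔ L.toSubmodule)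
      refine Submodule.mem_inf.mpr ⟨hSk k, Submodule.mem_sup.mpr
        ⟨-Ck k, neg_mem (hCk k), Ck k + Sk k,
          LieSubalgebra.subset_lieSpan ⟨k, rfl⟩, neg_add_cancel_left _ _⟩⟩
    intro x hx
    have hx' : x ∈ S.toSubmodule ⊓ (C ⊔ L.toSubmodule) := hQ hx
    obtain ⟨hxS, hxCL⟩ := Submodule.mem_inf.mp hx'
    obtain ⟨c, hc, l, hl, hx_eq⟩ := Submodule.mem_sup.mp hxCL
    refine ⟨-c, neg_mem hc, ?_⟩
    have h : -c + x = l := by rw [← hx_eq, neg_add_cancel_left]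
    rw [h]; exact hl
  -- Key C : (2) → (1)
  have keyC : L' = S → S.toSubmodule ≤ L.toSubmodule := by
    intro h2
    haveI := hss
    intro s hs
    have htop : (⟨s, hs⟩ : ↥S) ∈ ⁅(⊤ : LieIdeal ℝ ↥S), (⊤ : LieIdeal ℝ ↥S)⁆ := by
      rw [semisimple_perfect]; trivial
    rw [← LieSubmodule.mem_toSubmodule, LieSubmodule.lieIdeal_oper_eq_linear_span'] at htop
    have hsub : Submodule.span ℝ
        {m : ↥S | ∃ x ∈ (⊤ : LieIdeal ℝ ↥S), ∃ n ∈ (⊤ : LieIdeal ℝ ↥S), ⁅x, n⁆ = m} ≤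
        L.toSubmodule.comap (S.toSubmodule.subtype) := by
      rw [Submodule.span_le]
      rintro _ ⟨x, -, n, -, rfl⟩
      have hxL' : (x : Matrix (Fin N) (Fin N) ℂ) ∈ L' := by rw [h2]; exact x.2
      have hnL' : (n : Matrix (Fin N) (Fin N) ℂ) ∈ L' := by rw [h2]; exact n.2
      obtain ⟨c, hc, hcx⟩ := keyB _ hxL'
      obtain ⟨c', hc', hcn⟩ := keyB _ hnL'
      have heq : ⁅c + (x : Matrix (Fin N) (Fin N) ℂ), c' + (n : Matrix (Fin N) (Fin N) ℂ)⁆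
          = ⁅(x : Matrix (Fin N) (Fin N) ℂ), (n : Matrix (Fin N) (Fin N) ℂ)⁆ :=
        hbr c hc _ x.2 c' hc' _ n.2
      have hmem : ⁅(x : Matrix (Fin N) (Fin N) ℂ), (n : Matrix (Fin N) (Fin N) ℂ)⁆ ∈ L := by
        rw [← heq]; exact L.lie_mem hcx hcn
      exact hmem
    exact hsub htop
  -- (1) → (2)
  have h12 : S.toSubmodule ≤ L.toSubmodule → L' = S := by
    intro h1
    refine le_antisymm hL'S ?_
    intro s hs
    obtain ⟨c, hc, t, ht, hs_eq⟩ := Submodule.mem_sup.mp (keyA (h1 hs))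
    have hcCS : c ∈ C ⊓ S.toSubmodule := by
      refine ⟨hspanC hc, ?_⟩
      have h : c = s - t := by rw [← hs_eq, add_sub_cancel_right]
      rw [h]
      exact sub_mem hs (hL'S ht)
    rw [hinf, Submodule.mem_bot] at hcCS
    have h : s = t := by rw [← hs_eq, hcCS, zero_add]
    rw [h]; exact ht
  refine ⟨⟨h12, fun h2 => keyC h2⟩, ⟨?_, ?_⟩⟩
  · -- (2) → (3)
    intro h2
    refine le_antisymm ?_ ?_
    · have hLL' : L'.toSubmodule = S.toSubmodule := by rw [h2]
      calc L.toSubmodule ≤ Submodule.span ℝ (Set.range Ck) ⊔ L'.toSubmodule := keyA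
        _ = Submodule.span ℝ (Set.range Ck) ⊔ S.toSubmodule := by rw [hLL']
    · refine sup_le ?_ (keyC h2)
      rw [Submodule.span_le]
      rintro _ ⟨k, rfl⟩
      have h1 : Ck k + Sk k ∈ L := LieSubalgebra.subset_lieSpan ⟨k, rfl⟩
      have h2' : Sk k ∈ L := keyC h2 (hSk k)
      have h : Ck k = (Ck k + Sk k) - Sk k := (add_sub_cancel_right _ _).symm
      show Ck k ∈ L.toSubmodule
      rw [h]
      exact sub_mem h1 h2'
  · -- (3) → (2)
    intro h3
    apply h12
    rw [h3]
    exact le_sup_right
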